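/- Let m = 3, r ∈ ℕ, and λ ∈ ℂ. Define m(r,k,λ) ∈ ℂ recursively by m(r,0,λ) = 2N − 3r − λ and m(r,k,λ) = m(r,k−1,λ) + (2N − 3r − 4k) − λ for k ≥ 1. If f is a vertex function on C_3^N supported in Σ_r with A_- f = 0 and A_0 f = λ • f, then for every k ∈ ℕ, A_-(A_+^{k+1} f) = m(r,k,λ) • (A_+^k f), where A_+^k denotes the k-fold composition of A_+. -/
import Mathlib


open Finset

/-- The standard generator `e_k` of `(ZMod m)^N`: equal to `1` in coordinate `k`,
`0` elsewhere. -/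
def eV (N m : ℕ) (k : Fin N) : Fin N → ZMod m :=
  fun j => if j = k then 1 else 0

/-- Adjacency in the Cayley graph `C_m^N`: `v ∼ w` iff `w = v + e_k` or `w = v - e_k`
for some coordinate `k`. -/
def adj (N m : ℕ) (v w : Fin N → ZMod m) : Prop :=
  ∃ k : Fin N, w = v + eV N m k ∨ w = v - eV N m k

/-- The `k`-th level of a vertex: `d_k(v) = min((v k).val, m - (v k).val)`. -/
def lev (N m : ℕ) (v : Fin N → ZMod m) (k : Fin N) : ℕ :=
  min ((v k).val) (m - (v k).val)

/-- Path distance of a vertex to the origin: `d(v) = Σ_k d_k(v)`. -/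
def distO (N m : ℕ) (v : Fin N → ZMod m) : ℕ :=
  ∑ k : Fin N, lev N m v k

open Classical in
/-- Adjacency operator: `(A f)(v) = Σ_{w ∼ v} f(w)`. -/
noncomputable def Aop (N m : ℕ) [NeZero m] (f : (Fin N → ZMod m) → ℂ) :
    (Fin N → ZMod m) → ℂ :=
  fun v => ∑ w : Fin N → ZMod m, if adj N m v w then f w else 0

open Classical in
/-- Outer adjacency: `(A₊ f)(v) = Σ_{w ∼ v, d(w) < d(v)} f(w)`. -/
noncomputable def Aplus (N m : ℕ) [NeZero m] (f : (Fin N → ZMod m) → ℂ) :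
    (Fin N → ZMod m) → ℂ :=
  fun v => ∑ w : Fin N → ZMod m,
    if adj N m v w ∧ distO N m w < distO N m v then f w else 0

open Classical in
/-- Inner adjacency: `(A₋ f)(v) = Σ_{w ∼ v, d(w) > d(v)} f(w)`. -/
noncomputable def Aminus (N m : ℕ) [NeZero m] (f : (Fin N → ZMod m) → ℂ) :
    (Fin N → ZMod m) → ℂ :=
  fun v => ∑ w : Fin N → ZMod m,
    if adj N m v w ∧ distO N m v < distO N m w then f w else 0

open Classical in
/-- Neutral adjacency: `(A₀ f)(v) = Σ_{w ∼ v, d(w) = d(v)} f(w)`. -/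
noncomputable def Azero (N m : ℕ) [NeZero m] (f : (Fin N → ZMod m) → ℂ) :
    (Fin N → ZMod m) → ℂ :=
  fun v => ∑ w : Fin N → ZMod m,
    if adj N m v w ∧ distO N m w = distO N m v then f w else 0

/-- The `k`-reflection `ṽ_k` of a vertex: negate the `k`-th coordinate. -/
def reflV (N m : ℕ) (k : Fin N) (v : Fin N → ZMod m) : Fin N → ZMod m :=
  Function.update v k (-(v k))

/-- Level-one reflection sum: `(R₁ f)(v) = Σ_{k : d_k(v) = 1} f(ṽ_k)`. -/
noncomputable def R1 (N m : ℕ) (f : (Fin N → ZMod m) → ℂ) :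
    (Fin N → ZMod m) → ℂ :=
  fun v => ∑ k ∈ Finset.univ.filter (fun k => lev N m v k = 1), f (reflV N m k v)

/-- Number of coordinates of `v` at level `ℓ`. -/
def cardLev (N m : ℕ) (v : Fin N → ZMod m) (ℓ : ℕ) : ℕ :=
  (Finset.univ.filter (fun k => lev N m v k = ℓ)).card

/-- The multiplier `m(r,k,λ)`: `m(r,0,λ) = 2N - 3r - λ` and
`m(r,k,λ) = m(r,k-1,λ) + (2N - 3r - 4k) - λ`. -/
def mco (N r : ℕ) (lam : ℂ) : ℕ → ℂ
  | 0 => 2 * (N : ℂ) - 3 * (r : ℂ) - lam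
  | k + 1 => mco N r lam k + (2 * (N : ℂ) - 3 * (r : ℂ) - 4 * ((k : ℂ) + 1)) - lam

-- === infrastructure from a/b/c ===
lemma zmod3_cases : ∀ a : ZMod 3, a = 0 ∨ a = 1 ∨ a = 2 := by decide

lemma zmod3_univ : (univ : Finset (ZMod 3)) = {0, 1, 2} := by decide

lemma sum_zmod3 (g : ZMod 3 → ℂ) : ∑ x : ZMod 3, g x = g 0 + g 1 + g 2 := by
  rw [zmod3_univ, show ({0,1,2} : Finset (ZMod 3)) = insert 0 (insert 1 {2}) from rfl,
    Finset.sum_insert (by decide), Finset.sum_insert (by decide), Finset.sum_singleton]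
  ring

noncomputable def Loc {N : ℕ} (c : ZMod 3 → ZMod 3 → ℂ) (k : Fin N)
    (f : (Fin N → ZMod 3) → ℂ) (v : Fin N → ZMod 3) : ℂ :=
  ∑ x : ZMod 3, c (v k) x * f (Function.update v k x)

lemma loc_comp {N : ℕ} (c d : ZMod 3 → ZMod 3 → ℂ) (k : Fin N) (f) (v) :
    Loc c k (Loc d k f) v = Loc (fun a y => ∑ x : ZMod 3, c a x * d x y) k f v := by
  simp only [Loc, Function.update_self, Function.update_idem, Finset.mul_sum,
    Finset.sum_mul]
  rw [Finset.sum_comm]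
  exact Finset.sum_congr rfl fun y _ => Finset.sum_congr rfl fun x _ => by ring

lemma loc_comm {N : ℕ} (c d : ZMod 3 → ZMod 3 → ℂ) {k j : Fin N} (h : k ≠ j) (f) (v) :
    Loc c k (Loc d j f) v = Loc d j (Loc c k f) v := by
  simp only [Loc, Function.update_of_ne h, Function.update_of_ne (Ne.symm h),
    Finset.mul_sum]
  rw [Finset.sum_comm]
  refine Finset.sum_congr rfl fun y _ => Finset.sum_congr rfl fun x _ => ?_
  rw [Function.update_comm h]
  ring

lemma loc_sum {N : ℕ} {ι : Type*} (s : Finset ι) (c : ZMod 3 → ZMod 3 → ℂ) (k : Fin N)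
    (g : ι → (Fin N → ZMod 3) → ℂ) (v) :
    Loc c k (fun w => ∑ j ∈ s, g j w) v = ∑ j ∈ s, Loc c k (g j) v := by
  simp only [Loc, Finset.mul_sum]
  rw [Finset.sum_comm]

lemma zm3 : ∀ a : ZMod 3, a + 1 ≠ a ∧ a - 1 ≠ a ∧ a + 1 ≠ a - 1 := by decide

lemma add_eV {N : ℕ} (v : Fin N → ZMod 3) (k : Fin N) :
    v + eV N 3 k = Function.update v k (v k + 1) := by
  funext j
  by_cases h : j = k
  · subst h; simp [eV]
  · simp [eV, h, Function.update_of_ne h]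

lemma sub_eV {N : ℕ} (v : Fin N → ZMod 3) (k : Fin N) :
    v - eV N 3 k = Function.update v k (v k - 1) := by
  funext j
  by_cases h : j = k
  · subst h; simp [eV]
  · simp [eV, h, Function.update_of_ne h]

lemma adj_iff {N : ℕ} (v w : Fin N → ZMod 3) :
    adj N 3 v w ↔ ∃ k : Fin N, w = Function.update v k (v k + 1)
      ∨ w = Function.update v k (v k - 1) := by
  unfold adj
  simp only [add_eV, sub_eV]

lemma adj_unique {N : ℕ} {v w : Fin N → ZMod 3} {k j : Fin N}
    (hk : w = Function.update v k (v k + 1) ∨ w = Function.update v k (v k - 1))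
    (hj : w = Function.update v j (v j + 1) ∨ w = Function.update v j (v j - 1)) :
    k = j := by
  by_contra hne
  have h1 : w k ≠ v k := by
    rcases hk with h | h <;> subst h <;> simp only [Function.update_self]
    · exact (zm3 (v k)).1
    · exact (zm3 (v k)).2.1
  have h2 : w k = v k := by
    rcases hj with h | h <;> subst h <;> exact Function.update_of_ne hne _ _
  exact h1 h2

open Classical in
lemma sum_adj {N : ℕ} (C : (Fin N → ZMod 3) → Prop)
    (f : (Fin N → ZMod 3) → ℂ) (v : Fin N → ZMod 3) :
    (∑ w : Fin N → ZMod 3, if adj N 3 v w ∧ C w then f w else 0)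
      = ∑ k : Fin N,
        ((if C (Function.update v k (v k + 1)) then f (Function.update v k (v k + 1)) else 0)
        + (if C (Function.update v k (v k - 1)) then f (Function.update v k (v k - 1)) else 0)) := by
  have key : ∀ w, (if adj N 3 v w ∧ C w then f w else 0)
      = ∑ k : Fin N, ((if w = Function.update v k (v k + 1) ∧ C w then f w else 0)
        + (if w = Function.update v k (v k - 1) ∧ C w then f w else 0)) := by
    intro w
    by_cases hadj : adj N 3 v w
    · obtain ⟨k0, hk0⟩ := (adj_iff v w).mp hadj
      rw [Finset.sum_eq_single k0]
      · rcases hk0 with h | h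
        · have hne : w ≠ Function.update v k0 (v k0 - 1) := by
            rw [h]; intro hc
            have := congrFun hc k0
            simp only [Function.update_self] at this
            exact (zm3 (v k0)).2.2 this
          subst h; simp [hadj, hne]
        · have hne : w ≠ Function.update v k0 (v k0 + 1) := by
            rw [h]; intro hc
            have := congrFun hc k0
            simp only [Function.update_self] at this
            exact (zm3 (v k0)).2.2 this.symm
          subst h; simp [hadj, hne]
      · intro j _ hj
        have h1 : w ≠ Function.update v j (v j + 1) := fun hc =>
          hj (adj_unique hk0 (Or.inl hc)).symm
        have h2 : w ≠ Function.update v j (v j - 1) := fun hc =>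
          hj (adj_unique hk0 (Or.inr hc)).symm
        simp [h1, h2]
      · simp
    · have h1 : ∀ j : Fin N, w ≠ Function.update v j (v j + 1) := fun j hc =>
        hadj ((adj_iff v w).mpr ⟨j, Or.inl hc⟩)
      have h2 : ∀ j : Fin N, w ≠ Function.update v j (v j - 1) := fun j hc =>
        hadj ((adj_iff v w).mpr ⟨j, Or.inr hc⟩)
      simp [hadj, h1, h2]
  rw [Finset.sum_congr rfl fun w _ => key w, Finset.sum_comm]
  refine Finset.sum_congr rfl fun k _ => ?_
  rw [Finset.sum_add_distrib]
  congr 1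
  · simp only [ite_and]
    rw [Finset.sum_ite_eq' Finset.univ (Function.update v k (v k + 1))
      (fun w => if C w then f w else 0)]
    simp
  · simp only [ite_and]
    rw [Finset.sum_ite_eq' Finset.univ (Function.update v k (v k - 1))
      (fun w => if C w then f w else 0)]
    simp

def minv (x : ZMod 3) : ℕ := min x.val (3 - x.val)

lemma lev_eq_minv {N : ℕ} (v : Fin N → ZMod 3) (k : Fin N) : lev N 3 v k = minv (v k) := rfl

lemma distO_erase {N : ℕ} (v : Fin N → ZMod 3) (k : Fin N) :
    distO N 3 v = minv (v k) + ∑ j ∈ univ.erase k, lev N 3 v j :=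
  (Finset.add_sum_erase univ _ (mem_univ k)).symm

lemma distO_update {N : ℕ} (v : Fin N → ZMod 3) (k : Fin N) (x : ZMod 3) :
    distO N 3 (Function.update v k x) = minv x + ∑ j ∈ univ.erase k, lev N 3 v j := by
  rw [distO_erase (Function.update v k x) k, Function.update_self]
  congr 1
  refine Finset.sum_congr rfl fun j hj => ?_
  rw [lev_eq_minv, lev_eq_minv, Function.update_of_ne (Finset.ne_of_mem_erase hj)]

lemma distO_update_lt_iff {N : ℕ} (v : Fin N → ZMod 3) (k : Fin N) (x : ZMod 3) :
    distO N 3 (Function.update v k x) < distO N 3 v ↔ minv x < minv (v k) := by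
  rw [distO_update, distO_erase v k]; omega

lemma distO_update_gt_iff {N : ℕ} (v : Fin N → ZMod 3) (k : Fin N) (x : ZMod 3) :
    distO N 3 v < distO N 3 (Function.update v k x) ↔ minv (v k) < minv x := by
  rw [distO_update, distO_erase v k]; omega

lemma distO_update_eq_iff {N : ℕ} (v : Fin N → ZMod 3) (k : Fin N) (x : ZMod 3) :
    distO N 3 (Function.update v k x) = distO N 3 v ↔ minv x = minv (v k) := by
  rw [distO_update, distO_erase v k]; omega

-- numeral facts in ZMod 3
lemma za1 : (0:ZMod 3) + 1 = 1 := by decide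
lemma za2 : (0:ZMod 3) - 1 = 2 := by decide
lemma za3 : (1:ZMod 3) + 1 = 2 := by decide
lemma za4 : (1:ZMod 3) - 1 = 0 := by decide
lemma za5 : (2:ZMod 3) + 1 = 0 := by decide
lemma za6 : (2:ZMod 3) - 1 = 1 := by decide
lemma za7 : -(1:ZMod 3) = 2 := by decide
lemma za8 : -(2:ZMod 3) = 1 := by decide
lemma za9 : -(0:ZMod 3) = 0 := by decide
lemma za10 : (3:ZMod 3) = 0 := by decide
lemma zn1 : (1:ZMod 3) ≠ 0 := by decide
lemma zn2 : (2:ZMod 3) ≠ 0 := by decide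
lemma zn3 : (0:ZMod 3) ≠ 1 := by decide
lemma zn4 : (0:ZMod 3) ≠ 2 := by decide
lemma zn5 : (1:ZMod 3) ≠ 2 := by decide
lemma zn6 : (2:ZMod 3) ≠ 1 := by decide
lemma zm1 : minv 0 = 0 := by decide
lemma zm2 : minv 1 = 1 := by decide
lemma zm3' : minv 2 = 1 := by decide

-- === matrices ===
noncomputable def pmat : ZMod 3 → ZMod 3 → ℂ := fun a x => if a ≠ 0 ∧ x = 0 then 1 else 0
noncomputable def qmat : ZMod 3 → ZMod 3 → ℂ := fun a x => if a = 0 ∧ x ≠ 0 then 1 else 0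
noncomputable def nmat : ZMod 3 → ZMod 3 → ℂ := fun a x => if a ≠ 0 ∧ x = -a then 1 else 0

-- === representation lemmas ===
open Classical in
lemma aplus_loc {N : ℕ} (f : (Fin N → ZMod 3) → ℂ) (v : Fin N → ZMod 3) :
    Aplus N 3 f v = ∑ k : Fin N, Loc pmat k f v := by
  have hh := sum_adj (fun w => distO N 3 w < distO N 3 v) f v
  refine Eq.trans (Eq.trans ?_ hh) ?_
  · first
      | (unfold Aplus; congr!)
      | (unfold Aminus; congr!)
      | (unfold Azero; congr!)
  refine Finset.sum_congr rfl fun k _ => ?_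
  unfold Loc
  rw [sum_zmod3]
  simp only [distO_update_lt_iff]
  rcases zmod3_cases (v k) with h | h | h <;>
    simp only [h, za1, za2, za3, za4, za5, za6, za7, za8, za9, za10] <;>
    simp [pmat, za1, za2, za3, za4, za5, za6, za7, za8, za9, za10,
      zn1, zn2, zn3, zn4, zn5, zn6, zm1, zm2, zm3']

open Classical in
lemma aminus_loc {N : ℕ} (f : (Fin N → ZMod 3) → ℂ) (v : Fin N → ZMod 3) :
    Aminus N 3 f v = ∑ k : Fin N, Loc qmat k f v := by
  have hh := sum_adj (fun w => distO N 3 v < distO N 3 w) f v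
  refine Eq.trans (Eq.trans ?_ hh) ?_
  · first
      | (unfold Aplus; congr!)
      | (unfold Aminus; congr!)
      | (unfold Azero; congr!)
  refine Finset.sum_congr rfl fun k _ => ?_
  unfold Loc
  rw [sum_zmod3]
  simp only [distO_update_gt_iff]
  rcases zmod3_cases (v k) with h | h | h <;>
    simp only [h, za1, za2, za3, za4, za5, za6, za7, za8, za9, za10] <;>
    simp [qmat, za1, za2, za3, za4, za5, za6, za7, za8, za9, za10,
      zn1, zn2, zn3, zn4, zn5, zn6, zm1, zm2, zm3']

open Classical in
lemma azero_loc {N : ℕ} (f : (Fin N → ZMod 3) → ℂ) (v : Fin N → ZMod 3) :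
    Azero N 3 f v = ∑ k : Fin N, Loc nmat k f v := by
  have hh := sum_adj (fun w => distO N 3 w = distO N 3 v) f v
  refine Eq.trans (Eq.trans ?_ hh) ?_
  · first
      | (unfold Aplus; congr!)
      | (unfold Aminus; congr!)
      | (unfold Azero; congr!)
  refine Finset.sum_congr rfl fun k _ => ?_
  unfold Loc
  rw [sum_zmod3]
  simp only [distO_update_eq_iff]
  rcases zmod3_cases (v k) with h | h | h <;>
    simp only [h, za1, za2, za3, za4, za5, za6, za7, za8, za9, za10] <;>
    simp [nmat, za1, za2, za3, za4, za5, za6, za7, za8, za9, za10,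
      zn1, zn2, zn3, zn4, zn5, zn6, zm1, zm2, zm3']

-- === extra matrices ===
noncomputable def imat : ZMod 3 → ZMod 3 → ℂ := fun a x => if x = a then 1 else 0
noncomputable def zmat : ZMod 3 → ZMod 3 → ℂ := fun a x => if a = 0 ∧ x = 0 then 1 else 0

lemma update_self' {N : ℕ} (v : Fin N → ZMod 3) (k : Fin N) (x : ZMod 3) (h : v k = x) :
    Function.update v k x = v := by
  rw [← h]; exact Function.update_eq_self k v

lemma loc_imat {N : ℕ} (k : Fin N) (f) (v) : Loc imat k f v = f v := by
  unfold Loc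
  rw [sum_zmod3]
  rcases zmod3_cases (v k) with h | h | h <;>
    simp [imat, h, zn1, zn2, zn3, zn4, zn5, zn6, update_self' v k _ h]

lemma loc_zmat {N : ℕ} (k : Fin N) (f) (v) :
    Loc zmat k f v = if v k = 0 then f v else 0 := by
  unfold Loc
  rw [sum_zmod3]
  rcases zmod3_cases (v k) with h | h | h <;>
    simp [zmat, h, zn1, zn2, zn3, zn4, update_self' v k _ h]

lemma comm_local {N : ℕ} (k : Fin N) (f) (v) :
    Loc qmat k (Loc pmat k f) v
      = Loc pmat k (Loc qmat k f) v + 3 * Loc zmat k f v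
        - Loc nmat k f v - Loc imat k f v := by
  rw [loc_comp, loc_comp, loc_imat, loc_zmat]
  unfold Loc
  simp only [sum_zmod3]
  rcases zmod3_cases (v k) with h | h | h <;>
    simp [pmat, qmat, nmat, h, za7, za8, zn1, zn2, zn3, zn4, zn5, zn6,
      update_self' v k _ h] <;>
    ring

lemma nz_local {N : ℕ} (k : Fin N) (f) (v) :
    Loc nmat k (Loc pmat k f) v
      = Loc pmat k (Loc nmat k f) v + Loc pmat k f v := by
  rw [loc_comp, loc_comp]
  unfold Loc
  simp only [sum_zmod3]
  rcases zmod3_cases (v k) with h | h | h <;>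
    simp [pmat, nmat, h, za7, za8, zn1, zn2, zn3, zn4, zn5, zn6] <;>
    ring

lemma double_swap {N : ℕ} (c d : ZMod 3 → ZMod 3 → ℂ) (f) (v) :
    (∑ k : Fin N, ∑ j : Fin N, Loc c k (Loc d j f) v)
      = (∑ k : Fin N, ∑ j : Fin N, Loc d k (Loc c j f) v)
        + ∑ k : Fin N, (Loc c k (Loc d k f) v - Loc d k (Loc c k f) v) := by
  have hsw : (∑ k : Fin N, ∑ j : Fin N, Loc d k (Loc c j f) v)
      = ∑ k : Fin N, ∑ j : Fin N, Loc d j (Loc c k f) v := Finset.sum_comm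
  rw [hsw, ← Finset.sum_add_distrib]
  refine Finset.sum_congr rfl fun k _ => ?_
  have e1 : ∑ j : Fin N, (Loc c k (Loc d j f) v - Loc d j (Loc c k f) v)
      = Loc c k (Loc d k f) v - Loc d k (Loc c k f) v := by
    refine Finset.sum_eq_single k (fun j _ hj => ?_) (by simp)
    rw [loc_comm c d (Ne.symm hj) f v]
    ring
  rw [Finset.sum_sub_distrib] at e1
  linear_combination e1

-- === global identities ===
lemma card_zero_add_distO {N : ℕ} (v : Fin N → ZMod 3) :
    (univ.filter fun k => v k = 0).card + distO N 3 v = N := by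
  have hlev : ∀ k, lev N 3 v k = if v k = 0 then 0 else 1 := by
    intro k
    rcases zmod3_cases (v k) with h | h | h <;> rw [lev_eq_minv, h] <;>
      simp [zm1, zm2, zm3', zn1, zn2]
  have h1 : distO N 3 v = (univ.filter fun k => ¬ v k = 0).card := by
    unfold distO
    rw [Finset.sum_congr rfl fun k _ => (hlev k).trans (ite_not (v k = 0) 1 0).symm,
      Finset.sum_boole]
    simp
  rw [h1, Finset.card_filter_add_card_filter_not]
  simp

lemma comm_A {N : ℕ} (f : (Fin N → ZMod 3) → ℂ) (v : Fin N → ZMod 3) :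
    Aminus N 3 (Aplus N 3 f) v
      = Aplus N 3 (Aminus N 3 f) v
        + 3 * (((univ.filter fun k => v k = 0).card : ℂ)) * f v
        - Azero N 3 f v - (N : ℂ) * f v := by
  have hAf : Aplus N 3 f = fun w => ∑ j : Fin N, Loc pmat j f w := funext (aplus_loc f)
  have hBf : Aminus N 3 f = fun w => ∑ j : Fin N, Loc qmat j f w := funext (aminus_loc f)
  rw [aminus_loc (Aplus N 3 f) v, aplus_loc (Aminus N 3 f) v, azero_loc f v, hAf, hBf]
  simp only [loc_sum]
  rw [double_swap qmat pmat f v]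
  have diag : ∑ k : Fin N, (Loc qmat k (Loc pmat k f) v - Loc pmat k (Loc qmat k f) v)
      = 3 * (∑ k : Fin N, Loc zmat k f v) - (∑ k : Fin N, Loc nmat k f v)
        - (∑ k : Fin N, Loc imat k f v) := by
    rw [Finset.mul_sum, ← Finset.sum_sub_distrib, ← Finset.sum_sub_distrib]
    exact Finset.sum_congr rfl fun k _ => by rw [comm_local]; ring
  have hz : ∑ k : Fin N, Loc zmat k f v
      = ((univ.filter fun k => v k = 0).card : ℂ) * f v := by
    simp only [loc_zmat]
    rw [← Finset.sum_filter, Finset.sum_const, nsmul_eq_mul]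
  have hi : ∑ k : Fin N, Loc imat k f v = (N : ℂ) * f v := by
    simp only [loc_imat]
    rw [Finset.sum_const, nsmul_eq_mul]
    simp
  rw [diag, hz, hi]
  ring

lemma comm_B {N : ℕ} (f : (Fin N → ZMod 3) → ℂ) (v : Fin N → ZMod 3) :
    Azero N 3 (Aplus N 3 f) v
      = Aplus N 3 (Azero N 3 f) v + Aplus N 3 f v := by
  have hAf : Aplus N 3 f = fun w => ∑ j : Fin N, Loc pmat j f w := funext (aplus_loc f)
  have hNf : Azero N 3 f = fun w => ∑ j : Fin N, Loc nmat j f w := funext (azero_loc f)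
  rw [azero_loc (Aplus N 3 f) v, aplus_loc (Azero N 3 f) v, aplus_loc f v, hAf, hNf]
  simp only [loc_sum]
  rw [double_swap nmat pmat f v]
  have diag : ∑ k : Fin N, (Loc nmat k (Loc pmat k f) v - Loc pmat k (Loc nmat k f) v)
      = ∑ k : Fin N, Loc pmat k f v :=
    Finset.sum_congr rfl fun k _ => by rw [nz_local]; ring
  rw [diag]

open Classical in
lemma aplus_smul {N : ℕ} (c : ℂ) (f : (Fin N → ZMod 3) → ℂ) (v) :
    Aplus N 3 (c • f) v = c * Aplus N 3 f v := by
  unfold Aplus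
  rw [Finset.mul_sum]
  exact Finset.sum_congr rfl fun w _ => by
    by_cases h : adj N 3 v w ∧ distO N 3 w < distO N 3 v <;> simp [h]

open Classical in
lemma aplus_zero {N : ℕ} (v) : Aplus N 3 (0 : (Fin N → ZMod 3) → ℂ) v = 0 := by
  unfold Aplus
  simp

lemma support_Aplus {N : ℕ} (f : (Fin N → ZMod 3) → ℂ) (s : ℕ)
    (hf : ∀ v, distO N 3 v ≠ s → f v = 0) :
    ∀ v, distO N 3 v ≠ s + 1 → Aplus N 3 f v = 0 := by
  intro v hv
  rw [aplus_loc]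
  refine Finset.sum_eq_zero fun k _ => ?_
  unfold Loc
  refine Finset.sum_eq_zero fun x _ => ?_
  by_cases hc : ¬ v k = 0 ∧ x = 0
  · obtain ⟨h1, h2⟩ := hc
    subst h2
    have hm : minv (v k) = 1 := by
      rcases zmod3_cases (v k) with h | h | h
      · exact absurd h h1
      · rw [h]; exact zm2
      · rw [h]; exact zm3'
    have hfz : f (Function.update v k 0) = 0 := by
      apply hf
      rw [distO_update]
      rw [distO_erase v k, hm] at hv
      rw [zm1]
      omega
    rw [hfz, mul_zero]
  · have hp : pmat (v k) x = 0 := by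
      simp only [pmat]
      rw [if_neg hc]
    rw [hp, zero_mul]

theorem lowering_identity_C3 (N r : ℕ) (hN : 1 ≤ N) (lam : ℂ)
    (f : (Fin N → ZMod 3) → ℂ)
    (hf : ∀ v, distO N 3 v ≠ r → f v = 0)
    (hker : Aminus N 3 f = 0)
    (heig : Azero N 3 f = lam • f) :
    ∀ k : ℕ, Aminus N 3 ((Aplus N 3)^[k + 1] f)
      = mco N r lam k • (Aplus N 3)^[k] f := by
  have hsupp : ∀ j : ℕ, ∀ v, distO N 3 v ≠ r + j → (Aplus N 3)^[j] f v = 0 := by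
    intro j
    induction j with
    | zero => simpa using hf
    | succ j ih =>
      intro v hv
      rw [Function.iterate_succ_apply']
      exact support_Aplus _ (r + j) ih v (by omega)
  have heigj : ∀ j : ℕ, ∀ v, Azero N 3 ((Aplus N 3)^[j] f) v
      = (lam + (j : ℂ)) * (Aplus N 3)^[j] f v := by
    intro j
    induction j with
    | zero => intro v; simpa using congrFun heig v
    | succ j ih =>
      intro v
      rw [Function.iterate_succ_apply', comm_B]
      have hAz : Azero N 3 ((Aplus N 3)^[j] f)
          = (lam + (j : ℂ)) • (Aplus N 3)^[j] f :=
        funext fun w => (ih w).trans (by simp)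
      rw [hAz, aplus_smul, ← Function.iterate_succ_apply' (Aplus N 3) j f]
      push_cast
      ring
  intro k
  induction k with
  | zero =>
    funext v
    simp only [zero_add, Function.iterate_one, Function.iterate_zero, id_eq]
    rw [comm_A f v, hker, aplus_zero]
    have hAz := congrFun heig v
    simp only [Pi.smul_apply, smul_eq_mul] at hAz ⊢
    rw [hAz]
    by_cases hfv : f v = 0
    · simp [hfv]
    · have hd : distO N 3 v = r := by
        by_contra hd; exact hfv (hf v hd)
      have hcard := card_zero_add_distO v
      rw [hd] at hcard
      have hc : (((univ.filter fun k => v k = 0).card : ℕ) : ℂ) = (N : ℂ) - r := by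
        have h2 := congrArg (Nat.cast : ℕ → ℂ) hcard
        push_cast at h2
        linear_combination h2
      rw [hc]
      simp only [mco]
      ring
  | succ k ih =>
    funext v
    rw [show (Aplus N 3)^[k + 1 + 1] f = Aplus N 3 ((Aplus N 3)^[k + 1] f) from
      Function.iterate_succ_apply' (Aplus N 3) (k + 1) f]
    rw [comm_A ((Aplus N 3)^[k + 1] f) v, ih, aplus_smul, heigj (k + 1) v,
      ← Function.iterate_succ_apply' (Aplus N 3) k f]
    simp only [Pi.smul_apply, smul_eq_mul]
    by_cases hgv : (Aplus N 3)^[k + 1] f v = 0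
    · simp [hgv]
    · have hd : distO N 3 v = r + (k + 1) := by
        by_contra hd; exact hgv (hsupp (k + 1) v hd)
      have hcard := card_zero_add_distO v
      rw [hd] at hcard
      have hc : (((univ.filter fun j => v j = 0).card : ℕ) : ℂ)
          = (N : ℂ) - ((r : ℂ) + ((k : ℂ) + 1)) := by
        have h2 := congrArg (Nat.cast : ℕ → ℂ) hcard
        push_cast at h2
        linear_combination h2
      rw [hc]
      simp only [mco]
      push_cast
      ring
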